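/- Let n ≥ 1, let F = GF(2^n), set q = 2^n, let k be a field of characteristic 2 that is an F-algebra, let Λ₁ ⊆ k be a d-dimensional F-subspace of k, and let Λ = Λ₁ × Λ₁ ⊆ k². In the polynomial ring k[x, y, z] define f_x = ∏_{α ∈ Λ₁} (x + α·z), f_y = ∏_{α ∈ Λ₁} (y + α·z), and f_z = z. For each (α, β) ∈ Λ let σ_{α,β} be the k-algebra automorphism of k[x, y, z] determined by x ↦ x + α·z, y ↦ y + β·z, z ↦ z. Then the subalgebra of polynomials fixed by σ_{α,β} for all (α, β) ∈ Λ equals the k-subalgebra generated by f_x, f_y, f_z; moreover f_x, f_y, f_z are algebraically independent over k, so this ring of invariants is a polynomial ring. -/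

import Mathlib

open Polynomial in
private lemma aux_L1 {R : Type*} [CommRing R] [IsDomain R] (T : Finset R) (p : R[X])
    (hdeg : p.natDegree < T.card)
    (hcomp : ∀ t ∈ T, p.comp (X + C t) = p) : p.natDegree = 0 := by
  classical
  set q : R[X][X] := (p.map (C : R →+* R[X])).comp (Polynomial.C X + X) with hq
  have hqe : q = eval₂ ((C : R[X] →+* R[X][X]).comp (C : R →+* R[X])) (Polynomial.C X + X) p := by
    rw [hq, comp, eval₂_map]
  have hqeval : ∀ t : R, q.eval (Polynomial.C t) = p.comp (X + C t) := by
    intro t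
    have := hom_eval₂ p ((C : R[X] →+* R[X][X]).comp (C : R →+* R[X]))
      (evalRingHom (Polynomial.C t)) (Polynomial.C X + X)
    rw [hqe]
    show (evalRingHom (Polynomial.C t)) (eval₂ _ _ p) = _
    rw [this]
    have h1 : (evalRingHom (Polynomial.C t)).comp
        ((C : R[X] →+* R[X][X]).comp (C : R →+* R[X])) = (C : R →+* R[X]) := by
      ext a; simp
    have h2 : (evalRingHom (Polynomial.C t)) (Polynomial.C X + X) = X + C t := by
      simp
    rw [h1, h2]
    rfl
  have hDzero : q - Polynomial.C p = 0 := by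
    apply eq_zero_of_natDegree_lt_card_of_eval_eq_zero' _ (T.image (C : R → R[X]))
    · intro u hu
      obtain ⟨t, ht, rfl⟩ := Finset.mem_image.mp hu
      rw [eval_sub, hqeval t, hcomp t ht, eval_C, sub_self]
    · calc (q - Polynomial.C p).natDegree
          ≤ max q.natDegree (Polynomial.C p).natDegree := natDegree_sub_le _ _
        _ ≤ p.natDegree := by
            apply max_le
            · calc q.natDegree ≤ (p.map (C : R →+* R[X])).natDegree *
                    (Polynomial.C X + X).natDegree := natDegree_comp_le
                _ ≤ p.natDegree * 1 := by
                    apply Nat.mul_le_mul (natDegree_map_le)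
                    rw [add_comm, natDegree_X_add_C]
                _ = p.natDegree := mul_one _
            · simp
        _ < (T.image (C : R → R[X])).card := by
            rwa [Finset.card_image_of_injective _ (C_injective)]
  have hqCp : q = Polynomial.C p := by rwa [sub_eq_zero] at hDzero
  have h3 : q.natDegree = p.natDegree := by
    rw [hq, add_comm, natDegree_comp, natDegree_X_add_C, mul_one,
      natDegree_map_eq_of_injective (C_injective)]
  rw [hqCp, natDegree_C] at h3
  exact h3.symm

open Polynomial in
private lemma aux_div_fix {R : Type*} [CommRing R] [Nontrivial R] {G p : R[X]} (hG : G.Monic)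
    (Θ : R[X] →+* R[X]) (hΘG : Θ G = G) (hΘp : Θ p = p)
    (hdeg : ∀ s : R[X], (Θ s).natDegree ≤ s.natDegree) :
    Θ (p /ₘ G) = p /ₘ G ∧ Θ (p %ₘ G) = p %ₘ G := by
  have hdlt : (Θ (p %ₘ G)).degree < G.degree := by
    rcases eq_or_ne (p %ₘ G) 0 with h0 | h0
    · rw [h0, map_zero, degree_zero]
      exact bot_lt_iff_ne_bot.mpr (fun hb => hG.ne_zero (degree_eq_bot.mp hb))
    · refine lt_of_le_of_lt ?_ (degree_modByMonic_lt p hG)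
      rcases eq_or_ne (Θ (p %ₘ G)) 0 with h2 | h2
      · simp [h2]
      · rw [degree_eq_natDegree h2, degree_eq_natDegree h0]
        exact_mod_cast hdeg _
  have heq : Θ (p %ₘ G) + G * Θ (p /ₘ G) = p := by
    rw [show Θ (p %ₘ G) + G * Θ (p /ₘ G) = Θ (p %ₘ G + G * (p /ₘ G)) by
      rw [map_add, map_mul, hΘG], modByMonic_add_div p G, hΘp]
  have key := div_modByMonic_unique (Θ (p /ₘ G)) (Θ (p %ₘ G)) hG ⟨heq, hdlt⟩
  exact ⟨key.1.symm, key.2.symm⟩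

open Polynomial in
private lemma aux_expand {R : Type*} [CommRing R] [IsDomain R] {ι : Type*}
    (ψ : ι → R →+* R) (T : Finset R)
    (h0 : (0 : R) ∈ T)
    (hadd : ∀ t ∈ T, ∀ s ∈ T, t + s ∈ T)
    (hneg : ∀ t ∈ T, -t ∈ T)
    (hfix : ∀ i, ∀ t ∈ T, ψ i t = t) :
    ∀ (N : ℕ) (p : R[X]), p.natDegree ≤ N →
      (∀ t ∈ T, p.comp (X + C t) = p) → (∀ i, p.map (ψ i) = p) →
      ∃ c : R[X], (∀ j i, ψ i (c.coeff j) = c.coeff j) ∧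
        p = c.comp (∏ t ∈ T, (X + C t)) := by
  classical
  set G : R[X] := ∏ t ∈ T, (X + C t) with hGdef
  have hcard : 1 ≤ T.card := Finset.card_pos.mpr ⟨0, h0⟩
  have hGm : G.Monic := monic_prod_of_monic _ _ (fun t _ => monic_X_add_C t)
  have hGdeg : G.natDegree = T.card := by
    rw [hGdef, natDegree_prod _ _ (fun t _ => (monic_X_add_C t).ne_zero)]
    simp [natDegree_X_add_C]
  -- G is fixed by the translations
  have hGcomp : ∀ t ∈ T, G.comp (X + C t) = G := by
    intro t ht
    rw [hGdef, prod_comp]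
    have step : ∀ s ∈ T, (X + C s).comp (X + C t) = X + C (t + s) := by
      intro s _
      rw [add_comp, X_comp, C_comp, add_assoc, ← C_add]
    rw [Finset.prod_congr rfl step]
    refine Finset.prod_nbij' (fun s => t + s) (fun u => -t + u) ?_ ?_ ?_ ?_ ?_
    · intro s hs; exact hadd t ht s hs
    · intro u hu; exact hadd (-t) (hneg t ht) u hu
    · intro s _; ring_nf
    · intro u _; ring_nf
    · intro s _; rfl
  have hGmap : ∀ i, G.map (ψ i) = G := by
    intro i
    rw [hGdef, Polynomial.map_prod]
    refine Finset.prod_congr rfl (fun t ht => ?_)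
    rw [Polynomial.map_add, Polynomial.map_X, map_C, hfix i t ht]
  -- base helper
  have hbase : ∀ p : R[X], p.natDegree = 0 → (∀ i, p.map (ψ i) = p) →
      ∃ c : R[X], (∀ j i, ψ i (c.coeff j) = c.coeff j) ∧ p = c.comp G := by
    intro p hp0 hmap
    refine ⟨C (p.coeff 0), ?_, ?_⟩
    · intro j i
      rcases eq_or_ne j 0 with rfl | hj
      · rw [coeff_C_zero]
        have := congrArg (fun s => s.coeff 0) (hmap i)
        simpa using this
      · simp [coeff_C, hj]
    · rw [C_comp]
      exact eq_C_of_natDegree_eq_zero hp0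
  intro N
  induction N with
  | zero =>
    intro p hp hcomp hmap
    exact hbase p (Nat.le_zero.mp hp) hmap
  | succ n ih =>
    intro p hp hcomp hmap
    by_cases hlt : p.natDegree < T.card
    · exact hbase p (aux_L1 T p hlt hcomp) hmap
    · -- division step
      set q := p /ₘ G with hq
      set r := p %ₘ G with hr
      have hfixq_comp : ∀ t ∈ T, q.comp (X + C t) = q ∧ r.comp (X + C t) = r := by
        intro t ht
        have := aux_div_fix hGm (eval₂RingHom C (X + C t)) (hGcomp t ht) (hcomp t ht)
          (fun s => le_trans natDegree_comp_le (by rw [natDegree_X_add_C, mul_one]))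
        exact this
      have hfixq_map : ∀ i, q.map (ψ i) = q ∧ r.map (ψ i) = r := by
        intro i
        have := aux_div_fix hGm (mapRingHom (ψ i)) (hGmap i) (hmap i)
          (fun s => natDegree_map_le)
        exact this
      have hG1 : G ≠ 1 := by
        intro h
        rw [h, natDegree_one] at hGdeg
        omega
      have hrdeg : r.natDegree < T.card := by
        rw [← hGdeg]
        exact natDegree_modByMonic_lt p hGm hG1
      have hr0 : r.natDegree = 0 := aux_L1 T r hrdeg (fun t ht => (hfixq_comp t ht).2)
      have hrC : r = C (r.coeff 0) := eq_C_of_natDegree_eq_zero hr0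
      have hrfix : ∀ i, ψ i (r.coeff 0) = r.coeff 0 := by
        intro i
        have := congrArg (fun s => s.coeff 0) ((hfixq_map i).2)
        simpa using this
      have hqdeg : q.natDegree ≤ n := by
        rw [hq, natDegree_divByMonic p hGm, hGdeg]
        omega
      obtain ⟨cq, hcqfix, hcq⟩ := ih q hqdeg (fun t ht => (hfixq_comp t ht).1)
        (fun i => (hfixq_map i).1)
      refine ⟨cq * X + C (r.coeff 0), ?_, ?_⟩
      · intro j i
        rcases j with _ | j
        · simp [coeff_mul_X_zero, hrfix i]
        · simp [coeff_mul_X, coeff_C, hcqfix j i]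
      · rw [add_comp, mul_comp, X_comp, C_comp, ← hcq]
        have := modByMonic_add_div p G
        rw [← this, ← hq, ← hr, hrC, coeff_C_zero]
        ring

open Polynomial in
private lemma aux_comp_inj {S : Type*} [CommRing S] [IsDomain S] {q : Polynomial S}
    (hq : q.natDegree ≠ 0) :
    Function.Injective fun c : Polynomial S => c.comp q := by
  intro a b hab
  by_contra hne
  have hsub : (a - b).comp q = 0 := by
    rw [sub_comp]
    simpa [sub_eq_zero] using hab
  have h1 : (a - b).leadingCoeff * q.leadingCoeff ^ (a - b).natDegree ≠ 0 := by
    apply mul_ne_zero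
    · exact leadingCoeff_ne_zero.mpr (sub_ne_zero.mpr hne)
    · exact pow_ne_zero _ (leadingCoeff_ne_zero.mpr (fun h => hq (by simp [h])))
  have := leadingCoeff_comp (p := a - b) hq
  rw [hsub, leadingCoeff_zero] at this
  exact h1 this.symm
open Polynomial MvPolynomial in
private lemma aux_g1_mem {k : Type*} [Field k] (A : Subalgebra k (MvPolynomial (Fin 3) k))
    (hz : (MvPolynomial.X 2 : MvPolynomial (Fin 3) k) ∈ A) (w : MvPolynomial (Fin 1) k) :
    MvPolynomial.aeval ![(MvPolynomial.X 2 : MvPolynomial (Fin 3) k)] w ∈ A := by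
  induction w using MvPolynomial.induction_on with
  | C a => rw [MvPolynomial.aeval_C]; exact A.algebraMap_mem a
  | add p q hp hq => rw [map_add]; exact A.add_mem hp hq
  | mul_X p s hp =>
    rw [map_mul, MvPolynomial.aeval_X]
    have hs : s = 0 := Subsingleton.elim s 0
    subst hs
    exact A.mul_mem hp (by simpa using hz)
open Polynomial MvPolynomial in

section
variable {k : Type*} [Field k]

private lemma he2X0' : MvPolynomial.finSuccEquiv k 1 (MvPolynomial.X 0) = Polynomial.X :=
  finSuccEquiv_X_zero
private lemma he2X1' : MvPolynomial.finSuccEquiv k 1 (MvPolynomial.X 1)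
    = Polynomial.C (MvPolynomial.X 0) := by
  rw [show (1 : Fin 2) = Fin.succ 0 from rfl]; exact finSuccEquiv_X_succ
private lemma he2C' (a : k) : MvPolynomial.finSuccEquiv k 1 (MvPolynomial.C a)
    = Polynomial.C (MvPolynomial.C a) := by
  simp [MvPolynomial.finSuccEquiv_apply]

private lemma aux_level2 (Λf : Finset k)
    (h0 : (0:k) ∈ Λf) (hadd : ∀ a ∈ Λf, ∀ b ∈ Λf, a + b ∈ Λf) (hneg : ∀ a ∈ Λf, -a ∈ Λf)
    (A : Subalgebra k (MvPolynomial (Fin 3) k))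
    (hzA : (MvPolynomial.X 2 : MvPolynomial (Fin 3) k) ∈ A)
    (hfyA : (∏ a ∈ Λf, (MvPolynomial.X 1 + MvPolynomial.C a * MvPolynomial.X 2) :
      MvPolynomial (Fin 3) k) ∈ A)
    (r : MvPolynomial (Fin 2) k)
    (hr : ∀ b ∈ Λf, MvPolynomial.aeval
      ![MvPolynomial.X 0 + MvPolynomial.C b * MvPolynomial.X 1, MvPolynomial.X 1] r = r) :
    MvPolynomial.aeval ![(MvPolynomial.X 1 : MvPolynomial (Fin 3) k), MvPolynomial.X 2] r ∈ A := by
  classical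
  set e2 := MvPolynomial.finSuccEquiv k 1 with he2
  set f2 : k → MvPolynomial (Fin 1) k := fun a => MvPolynomial.C a * MvPolynomial.X 0 with hf2
  set T2 : Finset (MvPolynomial (Fin 1) k) := Λf.image f2 with hT2
  have hf2inj : ∀ x ∈ Λf, ∀ y ∈ Λf, f2 x = f2 y → x = y := by
    intro x _ y _ hxy
    have := mul_right_cancel₀ (MvPolynomial.X_ne_zero (0 : Fin 1)) hxy
    exact MvPolynomial.C_injective _ _ this
  set g1 : MvPolynomial (Fin 1) k →+* MvPolynomial (Fin 3) k :=
    (MvPolynomial.aeval ![(MvPolynomial.X 2 : MvPolynomial (Fin 3) k)] :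
      MvPolynomial (Fin 1) k →ₐ[k] MvPolynomial (Fin 3) k).toRingHom with hg1
  have trans2 : ∀ b : k,
      ((e2 : MvPolynomial (Fin 2) k ≃+* Polynomial (MvPolynomial (Fin 1) k)) :
        MvPolynomial (Fin 2) k →+* Polynomial (MvPolynomial (Fin 1) k)).comp
        (MvPolynomial.aeval ![MvPolynomial.X 0 + MvPolynomial.C b * MvPolynomial.X 1,
          MvPolynomial.X 1] : MvPolynomial (Fin 2) k →ₐ[k] MvPolynomial (Fin 2) k).toRingHom
      = (Polynomial.eval₂RingHom Polynomial.C (Polynomial.X + Polynomial.C (f2 b))).comp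
        ((e2 : MvPolynomial (Fin 2) k ≃+* Polynomial (MvPolynomial (Fin 1) k)) :
          MvPolynomial (Fin 2) k →+* Polynomial (MvPolynomial (Fin 1) k)) := by
    intro b
    apply MvPolynomial.ringHom_ext
    · intro a
      simp [he2, he2C', MvPolynomial.aeval_C, MvPolynomial.algebraMap_eq, Polynomial.eval₂_C]
    · intro i
      fin_cases i
      · simp [he2, he2X0', he2X1', he2C', hf2, coe_eval₂RingHom, Polynomial.eval₂_X, map_mul]
      · simp [he2, he2X1', coe_eval₂RingHom, Polynomial.eval₂_C]
  have hP2comp : ∀ t ∈ T2, (e2 r).comp (Polynomial.X + Polynomial.C t) = e2 r := by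
    intro t ht
    obtain ⟨b, hb, rfl⟩ := Finset.mem_image.mp ht
    have h := RingHom.congr_fun (trans2 b) r
    simp only [RingHom.comp_apply, RingHom.coe_coe, AlgHom.toRingHom_eq_coe,
      AlgHom.coe_toRingHom] at h
    rw [hr b hb] at h
    exact h.symm
  have h0T : (0 : MvPolynomial (Fin 1) k) ∈ T2 :=
    Finset.mem_image.mpr ⟨0, h0, by simp [hf2]⟩
  have haddT : ∀ t ∈ T2, ∀ s ∈ T2, t + s ∈ T2 := by
    intro t ht s hs
    obtain ⟨a, ha, rfl⟩ := Finset.mem_image.mp ht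
    obtain ⟨b, hb, rfl⟩ := Finset.mem_image.mp hs
    exact Finset.mem_image.mpr ⟨a + b, hadd a ha b hb, by simp [hf2]; ring⟩
  have hnegT : ∀ t ∈ T2, -t ∈ T2 := by
    intro t ht
    obtain ⟨a, ha, rfl⟩ := Finset.mem_image.mp ht
    exact Finset.mem_image.mpr ⟨-a, hneg a ha, by simp [hf2]⟩
  obtain ⟨c2, hc2fix, hc2⟩ := aux_expand (fun i : Empty => i.elim) T2 h0T haddT hnegT
    (fun i => i.elim) (e2 r).natDegree (e2 r) le_rfl hP2comp (fun i => i.elim)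
  set Gh2 : Polynomial (MvPolynomial (Fin 1) k) →+* MvPolynomial (Fin 3) k :=
    Polynomial.eval₂RingHom g1 (MvPolynomial.X 1) with hGh2
  have hg2eq : (MvPolynomial.aeval ![(MvPolynomial.X 1 : MvPolynomial (Fin 3) k),
      MvPolynomial.X 2] : MvPolynomial (Fin 2) k →ₐ[k] MvPolynomial (Fin 3) k).toRingHom
      = Gh2.comp ((e2 : MvPolynomial (Fin 2) k ≃+* Polynomial (MvPolynomial (Fin 1) k)) :
        MvPolynomial (Fin 2) k →+* Polynomial (MvPolynomial (Fin 1) k)) := by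
    apply MvPolynomial.ringHom_ext
    · intro a
      simp [he2, he2C', hGh2, hg1, MvPolynomial.aeval_C, MvPolynomial.algebraMap_eq,
        coe_eval₂RingHom, Polynomial.eval₂_C]
    · intro i
      fin_cases i
      · simp [he2, he2X0', hGh2, coe_eval₂RingHom, Polynomial.eval₂_X]
      · simp [he2, he2X1', hGh2, hg1, coe_eval₂RingHom, Polynomial.eval₂_C]
  have key : MvPolynomial.aeval ![(MvPolynomial.X 1 : MvPolynomial (Fin 3) k),
      MvPolynomial.X 2] r = Gh2 (e2 r) := by
    have := RingHom.congr_fun hg2eq r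
    simpa using this
  rw [key, hc2, comp_eq_sum_left, Polynomial.sum_def, map_sum]
  apply A.sum_mem
  intro i _
  rw [map_mul, map_pow]
  have h1 : Gh2 (Polynomial.C (c2.coeff i)) = g1 (c2.coeff i) := by
    simp [hGh2, coe_eval₂RingHom]
  have h2 : Gh2 (∏ t ∈ T2, (Polynomial.X + Polynomial.C t))
      = ∏ a ∈ Λf, (MvPolynomial.X 1 + MvPolynomial.C a * MvPolynomial.X 2) := by
    rw [map_prod, hT2, Finset.prod_image hf2inj]
    refine Finset.prod_congr rfl (fun a _ => ?_)
    rw [map_add]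
    have hX : Gh2 Polynomial.X = MvPolynomial.X 1 := by simp [hGh2, coe_eval₂RingHom]
    have hC : Gh2 (Polynomial.C (f2 a)) = MvPolynomial.C a * MvPolynomial.X 2 := by
      simp [hGh2, hg1, hf2, coe_eval₂RingHom, MvPolynomial.aeval_C, MvPolynomial.algebraMap_eq]
    rw [hX, hC]
  rw [h1, h2]
  exact A.mul_mem (aux_g1_mem A hzA _) (A.pow_mem hfyA i)

end
open Polynomial MvPolynomial in

section
variable {k : Type*} [Field k]

private lemma he3X0' : MvPolynomial.finSuccEquiv k 2 (MvPolynomial.X 0) = Polynomial.X :=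
  finSuccEquiv_X_zero
private lemma he3X1' : MvPolynomial.finSuccEquiv k 2 (MvPolynomial.X 1)
    = Polynomial.C (MvPolynomial.X 0) := by
  rw [show (1 : Fin 3) = Fin.succ 0 from rfl]; exact finSuccEquiv_X_succ
private lemma he3X2' : MvPolynomial.finSuccEquiv k 2 (MvPolynomial.X 2)
    = Polynomial.C (MvPolynomial.X 1) := by
  rw [show (2 : Fin 3) = Fin.succ 1 from rfl]; exact finSuccEquiv_X_succ
private lemma he3C' (a : k) : MvPolynomial.finSuccEquiv k 2 (MvPolynomial.C a)
    = Polynomial.C (MvPolynomial.C a) := by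
  simp [MvPolynomial.finSuccEquiv_apply]

private lemma aux_level1 (Λf : Finset k)
    (h0 : (0:k) ∈ Λf) (hadd : ∀ a ∈ Λf, ∀ b ∈ Λf, a + b ∈ Λf) (hneg : ∀ a ∈ Λf, -a ∈ Λf)
    (A : Subalgebra k (MvPolynomial (Fin 3) k))
    (hzA : (MvPolynomial.X 2 : MvPolynomial (Fin 3) k) ∈ A)
    (hfyA : (∏ a ∈ Λf, (MvPolynomial.X 1 + MvPolynomial.C a * MvPolynomial.X 2) :
      MvPolynomial (Fin 3) k) ∈ A)
    (hfxA : (∏ a ∈ Λf, (MvPolynomial.X 0 + MvPolynomial.C a * MvPolynomial.X 2) :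
      MvPolynomial (Fin 3) k) ∈ A)
    (p : MvPolynomial (Fin 3) k)
    (hp : ∀ α ∈ Λf, ∀ β ∈ Λf, MvPolynomial.aeval
      ![MvPolynomial.X 0 + MvPolynomial.C α * MvPolynomial.X 2,
        MvPolynomial.X 1 + MvPolynomial.C β * MvPolynomial.X 2, MvPolynomial.X 2] p = p) :
    p ∈ A := by
  classical
  set e3 := MvPolynomial.finSuccEquiv k 2 with he3
  set f1 : k → MvPolynomial (Fin 2) k := fun a => MvPolynomial.C a * MvPolynomial.X 1 with hf1
  set T1 : Finset (MvPolynomial (Fin 2) k) := Λf.image f1 with hT1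
  have hf1injm : ∀ x ∈ Λf, ∀ y ∈ Λf, f1 x = f1 y → x = y := by
    intro x _ y _ hxy
    have := mul_right_cancel₀ (MvPolynomial.X_ne_zero (1 : Fin 2)) hxy
    exact MvPolynomial.C_injective _ _ this
  set τ : k → MvPolynomial (Fin 2) k →+* MvPolynomial (Fin 2) k := fun b =>
    (MvPolynomial.aeval ![MvPolynomial.X 0 + MvPolynomial.C b * MvPolynomial.X 1,
      MvPolynomial.X 1] : MvPolynomial (Fin 2) k →ₐ[k] MvPolynomial (Fin 2) k).toRingHom with hτ
  -- transfer for pure x-translations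
  have trans_comp : ∀ a : k,
      ((e3 : MvPolynomial (Fin 3) k ≃+* Polynomial (MvPolynomial (Fin 2) k)) :
        MvPolynomial (Fin 3) k →+* Polynomial (MvPolynomial (Fin 2) k)).comp
        (MvPolynomial.aeval ![MvPolynomial.X 0 + MvPolynomial.C a * MvPolynomial.X 2,
          MvPolynomial.X 1 + MvPolynomial.C (0:k) * MvPolynomial.X 2, MvPolynomial.X 2] :
          MvPolynomial (Fin 3) k →ₐ[k] MvPolynomial (Fin 3) k).toRingHom
      = (Polynomial.eval₂RingHom Polynomial.C (Polynomial.X + Polynomial.C (f1 a))).comp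
        ((e3 : MvPolynomial (Fin 3) k ≃+* Polynomial (MvPolynomial (Fin 2) k)) :
          MvPolynomial (Fin 3) k →+* Polynomial (MvPolynomial (Fin 2) k)) := by
    intro a
    apply MvPolynomial.ringHom_ext
    · intro b
      simp [he3, he3C', MvPolynomial.aeval_C, MvPolynomial.algebraMap_eq, Polynomial.eval₂_C]
    · intro i
      fin_cases i
      · simp [he3, he3X0', he3X2', he3C', hf1, coe_eval₂RingHom, Polynomial.eval₂_X, map_mul]
      · simp [he3, he3X1', he3X2', he3C', coe_eval₂RingHom, Polynomial.eval₂_C]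
      · simp [he3, he3X2', coe_eval₂RingHom, Polynomial.eval₂_C]
  -- transfer for pure y-translations
  have trans_map : ∀ b : k,
      ((e3 : MvPolynomial (Fin 3) k ≃+* Polynomial (MvPolynomial (Fin 2) k)) :
        MvPolynomial (Fin 3) k →+* Polynomial (MvPolynomial (Fin 2) k)).comp
        (MvPolynomial.aeval ![MvPolynomial.X 0 + MvPolynomial.C (0:k) * MvPolynomial.X 2,
          MvPolynomial.X 1 + MvPolynomial.C b * MvPolynomial.X 2, MvPolynomial.X 2] :
          MvPolynomial (Fin 3) k →ₐ[k] MvPolynomial (Fin 3) k).toRingHom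
      = (Polynomial.mapRingHom (τ b)).comp
        ((e3 : MvPolynomial (Fin 3) k ≃+* Polynomial (MvPolynomial (Fin 2) k)) :
          MvPolynomial (Fin 3) k →+* Polynomial (MvPolynomial (Fin 2) k)) := by
    intro b
    apply MvPolynomial.ringHom_ext
    · intro a
      simp [he3, he3C', hτ, MvPolynomial.aeval_C, MvPolynomial.algebraMap_eq]
    · intro i
      fin_cases i
      · simp [he3, he3X0', he3C', hτ]
      · simp [he3, he3X0', he3X1', he3X2', he3C', hτ, map_mul]
      · simp [he3, he3X1', he3X2', hτ]
  have hcomp : ∀ t ∈ T1, (e3 p).comp (Polynomial.X + Polynomial.C t) = e3 p := by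
    intro t ht
    obtain ⟨a, ha, rfl⟩ := Finset.mem_image.mp ht
    have h := RingHom.congr_fun (trans_comp a) p
    simp only [RingHom.comp_apply, RingHom.coe_coe, AlgHom.toRingHom_eq_coe,
      AlgHom.coe_toRingHom] at h
    rw [hp a ha 0 h0] at h
    exact h.symm
  have hmap : ∀ b ∈ Λf, (e3 p).map (τ b) = e3 p := by
    intro b hb
    have h := RingHom.congr_fun (trans_map b) p
    simp only [RingHom.comp_apply, RingHom.coe_coe, AlgHom.toRingHom_eq_coe,
      AlgHom.coe_toRingHom, coe_mapRingHom] at h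
    rw [hp 0 h0 b hb] at h
    exact h.symm
  have h0T : (0 : MvPolynomial (Fin 2) k) ∈ T1 :=
    Finset.mem_image.mpr ⟨0, h0, by simp [hf1]⟩
  have haddT : ∀ t ∈ T1, ∀ s ∈ T1, t + s ∈ T1 := by
    intro t ht s hs
    obtain ⟨a, ha, rfl⟩ := Finset.mem_image.mp ht
    obtain ⟨b, hb, rfl⟩ := Finset.mem_image.mp hs
    exact Finset.mem_image.mpr ⟨a + b, hadd a ha b hb, by simp [hf1]; ring⟩
  have hnegT : ∀ t ∈ T1, -t ∈ T1 := by
    intro t ht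
    obtain ⟨a, ha, rfl⟩ := Finset.mem_image.mp ht
    exact Finset.mem_image.mpr ⟨-a, hneg a ha, by simp [hf1]⟩
  have hfixT : ∀ (i : {b : k // b ∈ Λf}), ∀ t ∈ T1, τ i.1 t = t := by
    rintro ⟨b, hb⟩ t ht
    obtain ⟨a, ha, rfl⟩ := Finset.mem_image.mp ht
    simp [hτ, hf1, map_mul, MvPolynomial.aeval_C, MvPolynomial.algebraMap_eq]
  obtain ⟨c, hcfix, hc⟩ := aux_expand (fun i : {b : k // b ∈ Λf} => τ i.1) T1 h0T haddT hnegT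
    hfixT (e3 p).natDegree (e3 p) le_rfl hcomp (fun i => hmap i.1 i.2)
  -- reconstruction homomorphism
  set g2 : MvPolynomial (Fin 2) k →+* MvPolynomial (Fin 3) k :=
    (MvPolynomial.aeval ![(MvPolynomial.X 1 : MvPolynomial (Fin 3) k), MvPolynomial.X 2] :
      MvPolynomial (Fin 2) k →ₐ[k] MvPolynomial (Fin 3) k).toRingHom with hg2
  set Gh3 : Polynomial (MvPolynomial (Fin 2) k) →+* MvPolynomial (Fin 3) k :=
    Polynomial.eval₂RingHom g2 (MvPolynomial.X 0) with hGh3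
  have hretr : Gh3.comp ((e3 : MvPolynomial (Fin 3) k ≃+* Polynomial (MvPolynomial (Fin 2) k)) :
      MvPolynomial (Fin 3) k →+* Polynomial (MvPolynomial (Fin 2) k))
      = RingHom.id (MvPolynomial (Fin 3) k) := by
    apply MvPolynomial.ringHom_ext
    · intro a
      simp [he3, he3C', hGh3, hg2, MvPolynomial.aeval_C, MvPolynomial.algebraMap_eq,
        coe_eval₂RingHom, Polynomial.eval₂_C]
    · intro i
      fin_cases i
      · simp [he3, he3X0', hGh3, coe_eval₂RingHom, Polynomial.eval₂_X]
      · simp [he3, he3X1', hGh3, hg2, coe_eval₂RingHom, Polynomial.eval₂_C]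
      · simp [he3, he3X2', hGh3, hg2, coe_eval₂RingHom, Polynomial.eval₂_C]
  have hkey : p = Gh3 (e3 p) := by
    have := RingHom.congr_fun hretr p
    simpa using this.symm
  rw [hkey, hc, comp_eq_sum_left, Polynomial.sum_def, map_sum]
  apply A.sum_mem
  intro i _
  rw [map_mul, map_pow]
  have h1 : Gh3 (Polynomial.C (c.coeff i)) = g2 (c.coeff i) := by
    simp [hGh3, coe_eval₂RingHom, Polynomial.eval₂_C]
  have h2 : Gh3 (∏ t ∈ T1, (Polynomial.X + Polynomial.C t))
      = ∏ a ∈ Λf, (MvPolynomial.X 0 + MvPolynomial.C a * MvPolynomial.X 2) := by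
    rw [map_prod, hT1, Finset.prod_image hf1injm]
    refine Finset.prod_congr rfl (fun a _ => ?_)
    rw [map_add]
    have hX : Gh3 Polynomial.X = MvPolynomial.X 0 := by
      simp [hGh3, coe_eval₂RingHom, Polynomial.eval₂_X]
    have hC : Gh3 (Polynomial.C (f1 a)) = MvPolynomial.C a * MvPolynomial.X 2 := by
      simp [hGh3, hg2, hf1, coe_eval₂RingHom, Polynomial.eval₂_C, map_mul,
        MvPolynomial.aeval_C, MvPolynomial.algebraMap_eq]
    rw [hX, hC]
  rw [h1, h2]
  refine A.mul_mem ?_ (A.pow_mem hfxA i)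
  -- the coefficient is invariant under the y-translations: apply level 2
  apply aux_level2 Λf h0 hadd hneg A hzA hfyA
  intro b hb
  have := hcfix i ⟨b, hb⟩
  simpa [hτ] using this
end
open Polynomial MvPolynomial in

section
variable {k : Type*} [Field k]

private lemma aux_deg_prod {R : Type*} [CommRing R] [IsDomain R] (T : Finset R) :
    (∏ t ∈ T, (Polynomial.X + Polynomial.C t)).natDegree = T.card := by
  rw [natDegree_prod _ _ (fun t _ => (monic_X_add_C t).ne_zero)]
  simp [natDegree_X_add_C]

private lemma aux_indep (Λf : Finset k) (h0 : (0:k) ∈ Λf) :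
    AlgebraicIndependent k
      ![(∏ a ∈ Λf, (MvPolynomial.X 0 + MvPolynomial.C a * MvPolynomial.X 2) :
          MvPolynomial (Fin 3) k),
        ∏ a ∈ Λf, (MvPolynomial.X 1 + MvPolynomial.C a * MvPolynomial.X 2),
        MvPolynomial.X 2] := by
  classical
  rw [algebraicIndependent_iff_injective_aeval]
  have hcard : Λf.card ≠ 0 := Finset.card_ne_zero_of_mem h0
  set f1 : k → MvPolynomial (Fin 2) k := fun a => MvPolynomial.C a * MvPolynomial.X 1 with hf1
  set f2 : k → MvPolynomial (Fin 1) k := fun a => MvPolynomial.C a * MvPolynomial.X 0 with hf2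
  have hf1inj : Function.Injective f1 := by
    intro x y hxy
    exact MvPolynomial.C_injective _ _
      (mul_right_cancel₀ (MvPolynomial.X_ne_zero (1 : Fin 2)) hxy)
  have hf2inj : Function.Injective f2 := by
    intro x y hxy
    exact MvPolynomial.C_injective _ _
      (mul_right_cancel₀ (MvPolynomial.X_ne_zero (0 : Fin 1)) hxy)
  set T1 : Finset (MvPolynomial (Fin 2) k) := Λf.image f1 with hT1
  set T2 : Finset (MvPolynomial (Fin 1) k) := Λf.image f2 with hT2
  set G1 : Polynomial (MvPolynomial (Fin 2) k) :=
    ∏ t ∈ T1, (Polynomial.X + Polynomial.C t) with hG1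
  set G2 : Polynomial (MvPolynomial (Fin 1) k) :=
    ∏ t ∈ T2, (Polynomial.X + Polynomial.C t) with hG2
  have hG1deg : G1.natDegree ≠ 0 := by
    rw [hG1, aux_deg_prod, hT1, Finset.card_image_of_injective _ hf1inj]
    exact hcard
  have hG2deg : G2.natDegree ≠ 0 := by
    rw [hG2, aux_deg_prod, hT2, Finset.card_image_of_injective _ hf2inj]
    exact hcard
  set Fy0 : MvPolynomial (Fin 2) k :=
    ∏ a ∈ Λf, (MvPolynomial.X 0 + MvPolynomial.C a * MvPolynomial.X 1) with hFy0
  set Ψ2 : MvPolynomial (Fin 2) k →ₐ[k] MvPolynomial (Fin 2) k :=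
    MvPolynomial.aeval ![Fy0, MvPolynomial.X 1] with hΨ2
  have he2Fy0 : MvPolynomial.finSuccEquiv k 1 Fy0 = G2 := by
    rw [hFy0, map_prod, hG2, hT2, Finset.prod_image (fun x _ y _ h => hf2inj h)]
    refine Finset.prod_congr rfl (fun a _ => ?_)
    rw [map_add, map_mul, he2X0', he2X1', he2C', hf2]
    rw [← Polynomial.C_mul]
  have hconj2 : ((MvPolynomial.finSuccEquiv k 1 : MvPolynomial (Fin 2) k ≃+*
        Polynomial (MvPolynomial (Fin 1) k)) :
      MvPolynomial (Fin 2) k →+* Polynomial (MvPolynomial (Fin 1) k)).comp Ψ2.toRingHom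
      = (Polynomial.eval₂RingHom Polynomial.C G2).comp
        ((MvPolynomial.finSuccEquiv k 1 : MvPolynomial (Fin 2) k ≃+*
          Polynomial (MvPolynomial (Fin 1) k)) :
          MvPolynomial (Fin 2) k →+* Polynomial (MvPolynomial (Fin 1) k)) := by
    apply MvPolynomial.ringHom_ext
    · intro a
      simp [he2C', hΨ2, MvPolynomial.aeval_C, MvPolynomial.algebraMap_eq,
        coe_eval₂RingHom, Polynomial.eval₂_C]
    · intro i
      fin_cases i
      · simp [hΨ2, he2Fy0, he2X0', coe_eval₂RingHom, Polynomial.eval₂_X]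
      · simp [hΨ2, he2X1', coe_eval₂RingHom, Polynomial.eval₂_C]
  have hΨ2inj : Function.Injective Ψ2 := by
    intro u v huv
    have h1 := RingHom.congr_fun hconj2 u
    have h2 := RingHom.congr_fun hconj2 v
    simp only [RingHom.comp_apply, RingHom.coe_coe, AlgHom.toRingHom_eq_coe,
      AlgHom.coe_toRingHom] at h1 h2
    have h3 := h1.symm.trans ((congrArg _ huv).trans h2)
    have h4 := aux_comp_inj hG2deg h3
    exact (MvPolynomial.finSuccEquiv k 1).injective h4
  have he3fx : MvPolynomial.finSuccEquiv k 2
      (∏ a ∈ Λf, (MvPolynomial.X 0 + MvPolynomial.C a * MvPolynomial.X 2)) = G1 := by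
    rw [map_prod, hG1, hT1, Finset.prod_image (fun x _ y _ h => hf1inj h)]
    refine Finset.prod_congr rfl (fun a _ => ?_)
    rw [map_add, map_mul, he3X0', he3X2', he3C', hf1, ← Polynomial.C_mul]
  have he3fy : MvPolynomial.finSuccEquiv k 2
      (∏ a ∈ Λf, (MvPolynomial.X 1 + MvPolynomial.C a * MvPolynomial.X 2))
      = Polynomial.C Fy0 := by
    rw [map_prod]
    have hfac : ∀ a ∈ Λf, (MvPolynomial.finSuccEquiv k 2)
        (MvPolynomial.X 1 + MvPolynomial.C a * MvPolynomial.X 2)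
        = Polynomial.C (MvPolynomial.X 0 + MvPolynomial.C a * MvPolynomial.X 1) := by
      intro a _
      rw [map_add, map_mul, he3X1', he3X2', he3C', ← Polynomial.C_mul, ← Polynomial.C_add]
    rw [Finset.prod_congr rfl hfac,
      ← map_prod (Polynomial.C : MvPolynomial (Fin 2) k →+* Polynomial (MvPolynomial (Fin 2) k)),
      hFy0]
  have hΨ2X0 : Ψ2 (MvPolynomial.X 0) = Fy0 := by simp [hΨ2]
  have hΨ2X1 : Ψ2 (MvPolynomial.X 1) = MvPolynomial.X 1 := by simp [hΨ2]
  have hconj3 : ((MvPolynomial.finSuccEquiv k 2 : MvPolynomial (Fin 3) k ≃+*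
        Polynomial (MvPolynomial (Fin 2) k)) :
      MvPolynomial (Fin 3) k →+* Polynomial (MvPolynomial (Fin 2) k)).comp
      (MvPolynomial.aeval
        ![(∏ a ∈ Λf, (MvPolynomial.X 0 + MvPolynomial.C a * MvPolynomial.X 2) :
            MvPolynomial (Fin 3) k),
          ∏ a ∈ Λf, (MvPolynomial.X 1 + MvPolynomial.C a * MvPolynomial.X 2),
          MvPolynomial.X 2] : MvPolynomial (Fin 3) k →ₐ[k] MvPolynomial (Fin 3) k).toRingHom
      = (Polynomial.eval₂RingHom Polynomial.C G1).comp
        ((Polynomial.mapRingHom (Ψ2 : MvPolynomial (Fin 2) k →+* MvPolynomial (Fin 2) k)).comp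
        ((MvPolynomial.finSuccEquiv k 2 : MvPolynomial (Fin 3) k ≃+*
          Polynomial (MvPolynomial (Fin 2) k)) :
          MvPolynomial (Fin 3) k →+* Polynomial (MvPolynomial (Fin 2) k))) := by
    apply MvPolynomial.ringHom_ext
    · intro a
      simp [he3C', hΨ2, MvPolynomial.aeval_C, MvPolynomial.algebraMap_eq,
        coe_eval₂RingHom, Polynomial.eval₂_C]
    · intro i
      fin_cases i
      · simp [he3fx, he3X0', coe_eval₂RingHom, coe_mapRingHom, Polynomial.eval₂_X]
      · simp [he3fy, he3X1', hΨ2X0, coe_eval₂RingHom, coe_mapRingHom, Polynomial.eval₂_C]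
      · simp [he3X2', hΨ2X1, coe_eval₂RingHom, coe_mapRingHom, Polynomial.eval₂_C]
  intro u v huv
  have h1 := RingHom.congr_fun hconj3 u
  have h2 := RingHom.congr_fun hconj3 v
  simp only [RingHom.comp_apply, RingHom.coe_coe, AlgHom.toRingHom_eq_coe,
    AlgHom.coe_toRingHom, coe_mapRingHom] at h1 h2
  have h3 := h1.symm.trans ((congrArg _ huv).trans h2)
  have h4 := aux_comp_inj hG1deg h3
  have h5 := Polynomial.map_injective _ hΨ2inj h4
  exact (MvPolynomial.finSuccEquiv k 2).injective h5
end

open MvPolynomial in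
/-- The invariants of the translation group `N = {σ_{α,β} : (α,β) ∈ Λ₁ × Λ₁}` acting on
`k[x,y,z]` by `x ↦ x + αz`, `y ↦ y + βz`, `z ↦ z` form the polynomial algebra generated
by `f_x = ∏_{α∈Λ₁}(x + αz)`, `f_y = ∏_{α∈Λ₁}(y + αz)`, `f_z = z`. -/
theorem stmt_8 (n : ℕ) (hn : 1 ≤ n) (F : Type*) [Field F] [Fintype F]
    (hF : Fintype.card F = 2 ^ n)
    (k : Type*) [Field k] [CharP k 2] [Algebra F k]
    (Λ₁ : Submodule F k) (hfin : (Λ₁ : Set k).Finite)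
    (d : ℕ) (hd : Module.finrank F Λ₁ = d)
    (σ : k → k → MvPolynomial (Fin 3) k →ₐ[k] MvPolynomial (Fin 3) k)
    (hσ : ∀ α β : k, σ α β = aeval ![X 0 + C α * X 2, X 1 + C β * X 2, X 2])
    (fx fy fz : MvPolynomial (Fin 3) k)
    (hfx : fx = ∏ α ∈ hfin.toFinset, (X 0 + C α * X 2))
    (hfy : fy = ∏ α ∈ hfin.toFinset, (X 1 + C α * X 2))
    (hfz : fz = X 2) :
    (∀ p : MvPolynomial (Fin 3) k,
      (∀ α β : k, α ∈ Λ₁ → β ∈ Λ₁ → σ α β p = p) ↔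
        p ∈ Algebra.adjoin k {fx, fy, fz}) ∧
    AlgebraicIndependent k ![fx, fy, fz] := by
  classical
  have hmemΛ : ∀ a : k, a ∈ hfin.toFinset ↔ a ∈ Λ₁ := fun a => hfin.mem_toFinset
  have h0Λ : (0 : k) ∈ hfin.toFinset := (hmemΛ 0).mpr Λ₁.zero_mem
  have haddΛ : ∀ a ∈ hfin.toFinset, ∀ b ∈ hfin.toFinset, a + b ∈ hfin.toFinset :=
    fun a ha b hb => (hmemΛ _).mpr (Λ₁.add_mem ((hmemΛ a).mp ha) ((hmemΛ b).mp hb))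
  have hnegΛ : ∀ a ∈ hfin.toFinset, -a ∈ hfin.toFinset := fun a ha =>
    (hmemΛ _).mpr (Λ₁.neg_mem ((hmemΛ a).mp ha))
  have hσC : ∀ α β (a : k), σ α β (C a) = C a := by
    intro α β a
    have := (σ α β).commutes a
    simpa [MvPolynomial.algebraMap_eq] using this
  have hσX0 : ∀ α β : k, σ α β (X 0) = X 0 + C α * X 2 := by
    intro α β; rw [hσ]; simp
  have hσX1 : ∀ α β : k, σ α β (X 1) = X 1 + C β * X 2 := by
    intro α β; rw [hσ]; simp
  have hσX2 : ∀ α β : k, σ α β (X 2) = X 2 := by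
    intro α β; rw [hσ]; simp
  have key_reindex : ∀ (α : k), α ∈ Λ₁ → ∀ v w : MvPolynomial (Fin 3) k,
      ∏ γ ∈ hfin.toFinset, (v + C (γ + α) * w) = ∏ γ ∈ hfin.toFinset, (v + C γ * w) := by
    intro α hα v w
    refine Finset.prod_nbij' (fun γ => γ + α) (fun γ => γ - α) ?_ ?_ ?_ ?_ ?_
    · intro γ hγ; exact (hmemΛ _).mpr (Λ₁.add_mem ((hmemΛ _).mp hγ) hα)
    · intro γ hγ; exact (hmemΛ _).mpr (Λ₁.sub_mem ((hmemΛ _).mp hγ) hα)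
    · intro γ _; ring
    · intro γ _; ring
    · intro γ _; rfl
  have hσfx : ∀ α β : k, α ∈ Λ₁ → σ α β fx = fx := by
    intro α β hα
    rw [hfx, map_prod]
    have hfac : ∀ γ ∈ hfin.toFinset, σ α β (X 0 + C γ * X 2) = X 0 + C (γ + α) * X 2 := by
      intro γ _
      rw [map_add, map_mul, hσX0, hσX2, hσC, MvPolynomial.C_add]
      ring
    rw [Finset.prod_congr rfl hfac, key_reindex α hα]
  have hσfy : ∀ α β : k, β ∈ Λ₁ → σ α β fy = fy := by
    intro α β hβ
    rw [hfy, map_prod]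
    have hfac : ∀ γ ∈ hfin.toFinset, σ α β (X 1 + C γ * X 2) = X 1 + C (γ + β) * X 2 := by
      intro γ _
      rw [map_add, map_mul, hσX1, hσX2, hσC, MvPolynomial.C_add]
      ring
    rw [Finset.prod_congr rfl hfac, key_reindex β hβ]
  have hfxA : fx ∈ Algebra.adjoin k {fx, fy, fz} := Algebra.subset_adjoin (by simp)
  have hfyA : fy ∈ Algebra.adjoin k {fx, fy, fz} := Algebra.subset_adjoin (by simp)
  have hfzA : fz ∈ Algebra.adjoin k {fx, fy, fz} := Algebra.subset_adjoin (by simp)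
  refine ⟨fun p => ⟨?_, ?_⟩, ?_⟩
  · intro hp
    apply aux_level1 hfin.toFinset h0Λ haddΛ hnegΛ (Algebra.adjoin k {fx, fy, fz})
      (hfz ▸ hfzA) (hfy ▸ hfyA) (hfx ▸ hfxA)
    intro α hα β hβ
    have := hp α β ((hmemΛ α).mp hα) ((hmemΛ β).mp hβ)
    rw [hσ α β] at this
    exact this
  · intro hp α β hα hβ
    induction hp using Algebra.adjoin_induction with
    | mem x hx =>
      simp only [Set.mem_insert_iff, Set.mem_singleton_iff] at hx
      rcases hx with rfl | rfl | rfl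
      · exact hσfx α β hα
      · exact hσfy α β hβ
      · rw [hfz]; exact hσX2 α β
    | algebraMap r => exact (σ α β).commutes r
    | add x y hx hy ihx ihy => rw [map_add, ihx, ihy]
    | mul x y hx hy ihx ihy => rw [map_mul, ihx, ihy]
  · rw [hfx, hfy, hfz]
    exact aux_indep hfin.toFinset h0Λ
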